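/- arXiv:math/0110325 — 2 statements merged into one kernel-verified Lean document; each statement's English description precedes it below -/
import Mathlib

section
/- Let B ∈ O(n), let L be a full lattice in ℝⁿ with B(L) = L, and set W := ker(B − I). Then the dual lattice of L ∩ W computed inside W equals the orthogonal projection of the dual lattice L* onto W; that is, {μ ∈ W : ⟨μ, λ⟩ ∈ ℤ for all λ ∈ L ∩ W} = p_B(L*), where p_B is the orthogonal projection of ℝⁿ onto W. -/
/-
STATEMENT 2: for B ∈ O(n) and a B-stable full lattice L in ℝⁿ, with W := ker(B − I),
the dual lattice of L ∩ W computed inside W equals p_B(L*):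
{μ ∈ W : ⟨μ, λ⟩ ∈ ℤ for all λ ∈ L ∩ W} = p_B(L*).
-/

set_option maxHeartbeats 2000000

noncomputable section

open scoped InnerProductSpace

/-- Euclidean `n`-space `ℝⁿ`. -/
abbrev Euc (n : ℕ) := EuclideanSpace ℝ (Fin n)

/-- The fixed subspace `ker (B - I)` of an orthogonal transformation `B ∈ O(n)`. -/
def fixSubmodule {n : ℕ} (B : Euc n ≃ₗᵢ[ℝ] Euc n) : Submodule ℝ (Euc n) :=
  LinearMap.ker ((B.toLinearEquiv : Euc n →ₗ[ℝ] Euc n) - LinearMap.id)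

/-- `p_B`, the orthogonal projection of `ℝⁿ` onto `ker (B - I)`. -/
def pB {n : ℕ} (B : Euc n ≃ₗᵢ[ℝ] Euc n) (x : Euc n) : Euc n :=
  ((fixSubmodule B).orthogonalProjectionOnto x : Euc n)

/-- `Λ` is a full lattice in `ℝⁿ`: the `ℤ`-span of an `ℝ`-basis of `ℝⁿ`. -/
def IsFullLattice {n : ℕ} (Λ : AddSubgroup (Euc n)) : Prop :=
  ∃ v : Module.Basis (Fin n) ℝ (Euc n),
    (Λ : Set (Euc n)) = (Submodule.span ℤ (Set.range ⇑v) : Set (Euc n))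

section Aux

variable {F : Type*} [NormedAddCommGroup F] [InnerProductSpace ℝ F]

def bilinFormOfRealInner : LinearMap.BilinForm ℝ F := innerₗ F

@[simp] lemma bilinFormOfRealInner_apply_apply (x y : F) :
    bilinFormOfRealInner (F := F) x y = ⟪x, y⟫_ℝ := rfl

lemma aux_nondeg : (bilinFormOfRealInner (F := F)).Nondegenerate := by
  refine ⟨fun x hx => ?_, fun x hx => ?_⟩ <;>
  · have := hx x
    simpa [bilinFormOfRealInner, inner_self_eq_zero] using this

lemma aux_symm : (bilinFormOfRealInner (F := F)).IsSymm := by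
  refine ⟨fun x y => ?_⟩
  simp [bilinFormOfRealInner, real_inner_comm]

lemma aux_mem_dual {N : Submodule ℤ F} {x : F} :
    x ∈ (bilinFormOfRealInner (F := F)).dualSubmodule N ↔
      ∀ y ∈ N, ∃ k : ℤ, ⟪x, y⟫_ℝ = (k : ℝ) := by
  simp only [LinearMap.BilinForm.mem_dualSubmodule, Submodule.mem_one,
    bilinFormOfRealInner_apply_apply]
  refine forall₂_congr fun y hy => exists_congr fun k => ?_
  rw [algebraMap_int_eq, eq_comm, eq_intCast]

end Aux

lemma mem_fix_iff {n : ℕ} {B : Euc n ≃ₗᵢ[ℝ] Euc n} {x : Euc n} :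
    x ∈ fixSubmodule B ↔ B x = x := by
  simp [fixSubmodule, LinearMap.mem_ker, sub_eq_zero, LinearMap.sub_apply]

lemma pow_fix {n : ℕ} {B : Euc n ≃ₗᵢ[ℝ] Euc n} {x : Euc n} (h : B x = x) (k : ℕ) :
    (B ^ k) x = x := by
  induction k with
  | zero => simp
  | succ k ih =>
    rw [pow_succ', LinearIsometryEquiv.coe_mul, Function.comp_apply, ih, h]

lemma myPowMem {n : ℕ} {B : Euc n ≃ₗᵢ[ℝ] Euc n} {Λ : Submodule ℤ (Euc n)}
    (hBΛ : ∀ x ∈ Λ, B x ∈ Λ) {x : Euc n} (hx : x ∈ Λ) (k : ℕ) :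
    (B ^ k) x ∈ Λ := by
  induction k with
  | zero => simpa using hx
  | succ k ih =>
    rw [pow_succ', LinearIsometryEquiv.coe_mul, Function.comp_apply]
    exact hBΛ _ ih

lemma pow_comp {n : ℕ} (B : Euc n ≃ₗᵢ[ℝ] Euc n) (a b : ℕ) (x : Euc n) :
    (B ^ (a + b)) x = (B ^ a) ((B ^ b) x) := by
  rw [pow_add, LinearIsometryEquiv.coe_mul, Function.comp_apply]

lemma pow_fix_mul {n : ℕ} {B : Euc n ≃ₗᵢ[ℝ] Euc n} {x : Euc n} {a : ℕ}
    (h : (B ^ a) x = x) (c : ℕ) : (B ^ (a * c)) x = x := by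
  induction c with
  | zero => simp
  | succ c ih => rw [Nat.mul_succ, pow_comp, h, ih]

lemma exists_pow_eq_one {n : ℕ} (B : Euc n ≃ₗᵢ[ℝ] Euc n) (v : Module.Basis (Fin n) ℝ (Euc n))
    (hBΛ : ∀ x ∈ Submodule.span ℤ (Set.range ⇑v), B x ∈ Submodule.span ℤ (Set.range ⇑v)) :
    ∃ m : ℕ, 0 < m ∧ ∀ x, (B ^ m) x = x := by
  classical
  have key : ∀ i : Fin n, ∃ m : ℕ, 0 < m ∧ (B ^ m) (v i) = v i := by
    intro i
    have hvi : v i ∈ Submodule.span ℤ (Set.range ⇑v) :=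
      Submodule.subset_span ⟨i, rfl⟩
    have horbit : ∀ k : ℕ, (B ^ k) (v i) ∈
        (Metric.closedBall (0 : Euc n) ‖v i‖ ∩ (Submodule.span ℤ (Set.range ⇑v) : Set (Euc n))) := by
      intro k
      refine ⟨?_, myPowMem hBΛ hvi k⟩
      simp [Metric.mem_closedBall, dist_zero_right]
    haveI : DiscreteTopology ((Submodule.span ℤ (Set.range ⇑v) : Set (Euc n))) :=
      inferInstanceAs (DiscreteTopology (Submodule.span ℤ (Set.range ⇑v)))
    have hfin : (Metric.closedBall (0 : Euc n) ‖v i‖ ∩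
        (Submodule.span ℤ (Set.range ⇑v) : Set (Euc n))).Finite := by
      refine Metric.finite_isBounded_inter_isClosed DiscreteTopology.isDiscrete Metric.isBounded_closedBall ?_
      exact AddSubgroup.isClosed_of_discrete (H := (Submodule.span ℤ (Set.range ⇑v)).toAddSubgroup)
    haveI := hfin.to_subtype
    obtain ⟨k, l, hkl, he⟩ := Finite.exists_ne_map_eq_of_infinite
      (fun k : ℕ => (⟨(B ^ k) (v i), horbit k⟩ : {x // x ∈ _}))
    have he' : (B ^ k) (v i) = (B ^ l) (v i) := congrArg Subtype.val he
    rcases hkl.lt_or_gt with h | h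
    · refine ⟨l - k, by omega, ?_⟩
      apply (B ^ k).injective
      rw [← pow_comp, Nat.add_sub_cancel' h.le]
      exact he'.symm
    · refine ⟨k - l, by omega, ?_⟩
      apply (B ^ l).injective
      rw [← pow_comp, Nat.add_sub_cancel' h.le]
      exact he' 
  choose m hm0 hmfix using key
  refine ⟨∏ i, m i, Finset.prod_pos (fun i _ => hm0 i), ?_⟩
  have hbasis : ∀ i, (B ^ ∏ j, m j) (v i) = v i := by
    intro i
    obtain ⟨c, hc⟩ := Finset.dvd_prod_of_mem m (Finset.mem_univ i)
    rw [hc]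
    exact pow_fix_mul (hmfix i) c
  intro x
  have : ((B ^ ∏ j, m j).toLinearEquiv : Euc n →ₗ[ℝ] Euc n) = LinearMap.id := by
    apply Module.Basis.ext v
    intro i
    simpa using hbasis i
  simpa using LinearMap.congr_fun this x

lemma proj_avg {n : ℕ} (B : Euc n ≃ₗᵢ[ℝ] Euc n) {m : ℕ} (hm0 : 0 < m)
    (hBm : ∀ x, (B ^ m) x = x) (l : Euc n) :
    (m : ℝ) • pB B l = ∑ k ∈ Finset.range m, (B ^ k) l := by
  set s : Euc n := ∑ k ∈ Finset.range m, (B ^ k) l with hs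
  have hsW : s ∈ fixSubmodule B := by
    rw [mem_fix_iff]
    have hmap : B s = ∑ k ∈ Finset.range m, (B ^ (k + 1)) l := by
      rw [hs, map_sum]
      refine Finset.sum_congr rfl fun k _ => ?_
      rw [pow_succ', LinearIsometryEquiv.coe_mul, Function.comp_apply]
    have h1 : ∑ k ∈ Finset.range m, (B ^ (k + 1)) l + (B ^ 0) l
        = ∑ k ∈ Finset.range m, (B ^ k) l + (B ^ m) l := by
      rw [← Finset.sum_range_succ' (fun k => (B ^ k) l) m, Finset.sum_range_succ]
    rw [hmap, hs]
    have h2 : (B ^ m) l = (B ^ 0) l := by simp [hBm l]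
    rw [h2] at h1
    exact add_right_cancel h1
  have horth : ∀ w ∈ fixSubmodule B, ⟪l - (m : ℝ)⁻¹ • s, w⟫_ℝ = 0 := by
    intro w hw
    have hw' : B w = w := mem_fix_iff.mp hw
    have hinner : ⟪s, w⟫_ℝ = (m : ℝ) * ⟪l, w⟫_ℝ := by
      rw [hs, sum_inner]
      have : ∀ k ∈ Finset.range m, ⟪(B ^ k) l, w⟫_ℝ = ⟪l, w⟫_ℝ := by
        intro k _
        conv_lhs => rw [← pow_fix hw' k]
        exact (B ^ k).inner_map_map l w
      rw [Finset.sum_congr rfl this]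
      simp [Finset.sum_const, mul_comm]
    rw [inner_sub_left, real_inner_smul_left]
    rw [hinner]
    have : (m : ℝ) ≠ 0 := Nat.cast_ne_zero.mpr hm0.ne'
    field_simp
    simp
  have hproj : ((fixSubmodule B).orthogonalProjectionOnto l : Euc n) = (m : ℝ)⁻¹ • s := by
    refine Submodule.eq_starProjection_of_mem_of_inner_eq_zero (K := fixSubmodule B) ?_ horth
    exact Submodule.smul_mem _ _ hsW
  rw [pB, hproj, smul_smul]
  have : (m : ℝ) ≠ 0 := Nat.cast_ne_zero.mpr hm0.ne'
  rw [mul_inv_cancel₀ this, one_smul]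

lemma proj_inner {n : ℕ} (B : Euc n ≃ₗᵢ[ℝ] Euc n) (ν : Euc n) {y : Euc n}
    (hy : y ∈ fixSubmodule B) : ⟪pB B ν, y⟫_ℝ = ⟪ν, y⟫_ℝ := by
  have h := Submodule.starProjection_inner_eq_zero (K := fixSubmodule B) ν y hy
  rw [inner_sub_left, Submodule.starProjection_apply] at h
  rw [pB]
  linarith

open Submodule in
theorem main_aux {n : ℕ} (B : Euc n ≃ₗᵢ[ℝ] Euc n) (v : Module.Basis (Fin n) ℝ (Euc n))
    (hBΛ : ∀ x ∈ Submodule.span ℤ (Set.range ⇑v), B x ∈ Submodule.span ℤ (Set.range ⇑v)) :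
    {μ : Euc n | μ ∈ fixSubmodule B ∧
        ∀ l : Euc n, l ∈ Submodule.span ℤ (Set.range ⇑v) → l ∈ fixSubmodule B →
          ∃ k : ℤ, ⟪μ, l⟫_ℝ = (k : ℝ)}
      = pB B '' {μ : Euc n | ∀ l ∈ Submodule.span ℤ (Set.range ⇑v),
          ∃ k : ℤ, ⟪μ, l⟫_ℝ = (k : ℝ)} := by
  classical
  obtain ⟨m, hm0, hBm⟩ := exists_pow_eq_one B v hBΛ
  -- the dual basis
  set w : Module.Basis (Fin n) ℝ (Euc n) :=
    (bilinFormOfRealInner (F := Euc n)).dualBasis aux_nondeg v with hw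
  have hdualE : (bilinFormOfRealInner (F := Euc n)).dualSubmodule
      (Submodule.span ℤ (Set.range ⇑v)) = Submodule.span ℤ (Set.range ⇑w) :=
    LinearMap.BilinForm.dualSubmodule_span_of_basis _ aux_nondeg v
  have hddE : (bilinFormOfRealInner (F := Euc n)).dualSubmodule
      ((bilinFormOfRealInner (F := Euc n)).dualSubmodule (Submodule.span ℤ (Set.range ⇑v)))
      = Submodule.span ℤ (Set.range ⇑v) :=
    LinearMap.BilinForm.dualSubmodule_dualSubmodule_of_basis _ aux_nondeg aux_symm v
  -- the projection as a ℤ-linear map into the fixed subspace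
  set pmap : Euc n →ₗ[ℤ] fixSubmodule B :=
    ((orthogonalProjection (fixSubmodule B)).toLinearMap.restrictScalars ℤ) with hpmap
  have hpB : ∀ x : Euc n, ((pmap x : fixSubmodule B) : Euc n) = pB B x := fun _ => rfl
  -- the lattice M = L ∩ W inside W
  set M : Submodule ℤ (fixSubmodule B) :=
    ZLattice.comap ℝ (Submodule.span ℤ (Set.range ⇑v)) (fixSubmodule B).subtype with hM
  have hMmem : ∀ x : fixSubmodule B,
      x ∈ M ↔ (x : Euc n) ∈ Submodule.span ℤ (Set.range ⇑v) := fun _ => Iff.rfl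
  haveI hMd : DiscreteTopology M :=
    ZLattice.comap_discreteTopology ℝ _ continuous_subtype_val (Submodule.injective_subtype _)
  -- every projection of a vector lands in span ℝ M
  have hvM : ∀ i, orthogonalProjection (fixSubmodule B) (v i)
      ∈ Submodule.span ℝ (M : Set (fixSubmodule B)) := by
    intro i
    have h1 : ((m : ℤ) • orthogonalProjection (fixSubmodule B) (v i)) ∈ M := by
      rw [hMmem]
      have hcoe : (((m : ℤ) • orthogonalProjection (fixSubmodule B) (v i)
          : fixSubmodule B) : Euc n)
          = (m : ℝ) • pB B (v i) := by
        rw [Submodule.coe_smul_of_tower, ← Int.cast_smul_eq_zsmul ℝ]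
        push_cast
        rfl
      rw [hcoe, proj_avg B hm0 hBm (v i)]
      exact Submodule.sum_mem _ fun k _ =>
        myPowMem hBΛ (Submodule.subset_span ⟨i, rfl⟩) k
    have h2 : orthogonalProjection (fixSubmodule B) (v i)
        = (m : ℝ)⁻¹ • (((m : ℤ) • orthogonalProjection (fixSubmodule B) (v i))) := by
      rw [← Int.cast_smul_eq_zsmul ℝ, smul_smul]
      have hmne : (m : ℝ) ≠ 0 := Nat.cast_ne_zero.mpr hm0.ne'
      push_cast
      rw [inv_mul_cancel₀ hmne, one_smul]
    rw [h2]
    exact Submodule.smul_mem _ _ (Submodule.subset_span h1)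
  have hprojspan : ∀ x : Euc n, orthogonalProjection (fixSubmodule B) x
      ∈ Submodule.span ℝ (M : Set (fixSubmodule B)) := by
    intro x
    have hx : x ∈ Submodule.span ℝ (Set.range ⇑v) := by rw [v.span_eq]; trivial
    induction hx using Submodule.span_induction with
    | mem y hy =>
      obtain ⟨i, rfl⟩ := hy
      exact hvM i
    | zero => simp
    | add a b ha hb iha ihb => rw [map_add]; exact add_mem iha ihb
    | smul r a ha iha => rw [map_smul]; exact Submodule.smul_mem _ _ iha
  have hMspan : Submodule.span ℝ (M : Set (fixSubmodule B)) = ⊤ := by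
    rw [eq_top_iff]
    intro y _
    have := hprojspan (y : Euc n)
    rwa [orthogonalProjection_mem_subspace_eq_self] at this
  haveI : IsZLattice ℝ M := ⟨hMspan⟩
  haveI : Module.Finite ℤ M := ZLattice.module_finite ℝ M
  haveI : Module.Free ℤ M := ZLattice.module_free ℝ M
  set u : Module.Basis (Module.Free.ChooseBasisIndex ℤ M) ℝ (fixSubmodule B) :=
    (Module.Free.chooseBasis ℤ M).ofZLatticeBasis ℝ M with hu
  have hMspanu : Submodule.span ℤ (Set.range ⇑u) = M :=
    (Module.Free.chooseBasis ℤ M).ofZLatticeBasis_span ℝ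
  -- the lattice P = pB(L*) inside W
  set P : Submodule ℤ (fixSubmodule B) :=
    Submodule.map pmap (Submodule.span ℤ (Set.range ⇑w)) with hP
  have hPle : P ≤ (bilinFormOfRealInner (F := fixSubmodule B)).dualSubmodule M := by
    rintro x ⟨ν, hν, rfl⟩
    rw [aux_mem_dual]
    intro y hy
    have hν' : ν ∈ (bilinFormOfRealInner (F := Euc n)).dualSubmodule
        (Submodule.span ℤ (Set.range ⇑v)) := by rw [hdualE]; exact hν
    obtain ⟨k, hk⟩ := aux_mem_dual.mp hν' (y : Euc n) ((hMmem y).mp hy)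
    refine ⟨k, ?_⟩
    rw [Submodule.coe_inner, hpB, proj_inner B ν y.2]
    exact hk

  have hdM : (bilinFormOfRealInner (F := fixSubmodule B)).dualSubmodule M
      = Submodule.span ℤ (Set.range
          ⇑((bilinFormOfRealInner (F := fixSubmodule B)).dualBasis aux_nondeg u)) := by
    conv_lhs => rw [← hMspanu]
    exact LinearMap.BilinForm.dualSubmodule_span_of_basis _ aux_nondeg u
  haveI hPd : DiscreteTopology P := by
    have h1 : DiscreteTopology ((Submodule.span ℤ (Set.range
        ⇑((bilinFormOfRealInner (F := fixSubmodule B)).dualBasis aux_nondeg u))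
          : Set (fixSubmodule B))) :=
      inferInstanceAs (DiscreteTopology (Submodule.span ℤ (Set.range
        ⇑((bilinFormOfRealInner (F := fixSubmodule B)).dualBasis aux_nondeg u))))
    exact DiscreteTopology.of_subset h1 (by rw [← hdM]; exact hPle)
  have hPspan : Submodule.span ℝ (P : Set (fixSubmodule B)) = ⊤ := by
    have hPproj : ∀ x : Euc n, orthogonalProjection (fixSubmodule B) x
        ∈ Submodule.span ℝ (P : Set (fixSubmodule B)) := by
      intro x
      have hx : x ∈ Submodule.span ℝ (Set.range ⇑w) := by rw [w.span_eq]; trivial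
      induction hx using Submodule.span_induction with
      | mem y hy =>
        refine Submodule.subset_span ?_
        exact ⟨y, Submodule.subset_span hy, rfl⟩
      | zero => simp
      | add a b ha hb iha ihb => rw [map_add]; exact add_mem iha ihb
      | smul r a ha iha => rw [map_smul]; exact Submodule.smul_mem _ _ iha
    rw [eq_top_iff]
    intro y _
    have := hPproj (y : Euc n)
    rwa [orthogonalProjection_mem_subspace_eq_self] at this
  haveI : IsZLattice ℝ P := ⟨hPspan⟩
  haveI : Module.Finite ℤ P := ZLattice.module_finite ℝ P
  haveI : Module.Free ℤ P := ZLattice.module_free ℝ P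
  set c : Module.Basis (Module.Free.ChooseBasisIndex ℤ P) ℝ (fixSubmodule B) :=
    (Module.Free.chooseBasis ℤ P).ofZLatticeBasis ℝ P with hc
  have hPspanc : Submodule.span ℤ (Set.range ⇑c) = P :=
    (Module.Free.chooseBasis ℤ P).ofZLatticeBasis_span ℝ
  have hdualP : (bilinFormOfRealInner (F := fixSubmodule B)).dualSubmodule P = M := by
    ext x
    rw [aux_mem_dual, hMmem]
    constructor
    · intro h
      have hx : (x : Euc n) ∈ (bilinFormOfRealInner (F := Euc n)).dualSubmodule
          ((bilinFormOfRealInner (F := Euc n)).dualSubmodule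
            (Submodule.span ℤ (Set.range ⇑v))) := by
        rw [aux_mem_dual]
        intro ν hν'
        have hν : ν ∈ Submodule.span ℤ (Set.range ⇑w) := by rw [← hdualE]; exact hν'
        obtain ⟨k, hk⟩ := h (pmap ν) (Submodule.mem_map_of_mem hν)
        refine ⟨k, ?_⟩
        rw [Submodule.coe_inner, hpB] at hk
        rw [real_inner_comm] at hk ⊢
        rwa [proj_inner B ν x.2] at hk
      rwa [hddE] at hx
    · rintro hx y ⟨ν, hν, rfl⟩
      have hν' : ν ∈ (bilinFormOfRealInner (F := Euc n)).dualSubmodule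
          (Submodule.span ℤ (Set.range ⇑v)) := by rw [hdualE]; exact hν
      obtain ⟨k, hk⟩ := aux_mem_dual.mp hν' (x : Euc n) hx
      refine ⟨k, ?_⟩
      rw [Submodule.coe_inner, hpB, real_inner_comm, proj_inner B ν x.2]
      exact hk
  have hdualM : (bilinFormOfRealInner (F := fixSubmodule B)).dualSubmodule M = P := by
    have hdd := LinearMap.BilinForm.dualSubmodule_dualSubmodule_of_basis (R := ℤ)
      (bilinFormOfRealInner (F := fixSubmodule B)) aux_nondeg aux_symm c
    rw [hPspanc] at hdd
    rw [← hdualP, hdd]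
  ext x
  simp only [Set.mem_setOf_eq, Set.mem_image]
  constructor
  · rintro ⟨hxW, hdual⟩
    have hx' : (⟨x, hxW⟩ : fixSubmodule B) ∈
        (bilinFormOfRealInner (F := fixSubmodule B)).dualSubmodule M := by
      rw [aux_mem_dual]
      intro y hy
      obtain ⟨k, hk⟩ := hdual (y : Euc n) ((hMmem y).mp hy) y.2
      exact ⟨k, by rw [Submodule.coe_inner]; exact hk⟩
    rw [hdualM] at hx'
    obtain ⟨ν, hν, hpν⟩ := hx'
    refine ⟨ν, ?_, ?_⟩
    · intro l hl
      have hν' : ν ∈ (bilinFormOfRealInner (F := Euc n)).dualSubmodule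
          (Submodule.span ℤ (Set.range ⇑v)) := by rw [hdualE]; exact hν
      exact aux_mem_dual.mp hν' l hl
    · have h2 := congrArg (Subtype.val) hpν
      rw [hpB] at h2
      exact h2
  · rintro ⟨ν, hν, rfl⟩
    have hν' : ν ∈ (bilinFormOfRealInner (F := Euc n)).dualSubmodule
        (Submodule.span ℤ (Set.range ⇑v)) := by
      rw [aux_mem_dual]; exact hν
    constructor
    · exact (pmap ν).2
    · intro l hl hlW
      obtain ⟨k, hk⟩ := aux_mem_dual.mp hν' l hl
      exact ⟨k, by rw [proj_inner B ν hlW]; exact hk⟩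

theorem dual_lattice_of_fixed_sublattice_eq_projection_of_dual
    {n : ℕ} (B : Euc n ≃ₗᵢ[ℝ] Euc n) (L : AddSubgroup (Euc n))
    (hL : IsFullLattice L) (hBL : ∀ x : Euc n, x ∈ L ↔ B x ∈ L) :
    {μ : Euc n | μ ∈ fixSubmodule B ∧
        ∀ l : Euc n, l ∈ L → l ∈ fixSubmodule B → ∃ k : ℤ, ⟪μ, l⟫_ℝ = (k : ℝ)}
      = pB B '' {μ : Euc n | ∀ l ∈ L, ∃ k : ℤ, ⟪μ, l⟫_ℝ = (k : ℝ)} := by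
  obtain ⟨v, hv⟩ := hL
  have hmem : ∀ x : Euc n, x ∈ L ↔ x ∈ Submodule.span ℤ (Set.range ⇑v) := by
    intro x
    constructor
    · intro h
      have hx : x ∈ (L : Set (Euc n)) := h
      rw [hv] at hx
      exact hx
    · intro h
      have hx : x ∈ ((Submodule.span ℤ (Set.range ⇑v)) : Set (Euc n)) := h
      rw [← hv] at hx
      exact hx
  have hBΛ : ∀ x ∈ Submodule.span ℤ (Set.range ⇑v), B x ∈ Submodule.span ℤ (Set.range ⇑v) :=
    fun x hx => (hmem _).mp ((hBL x).mp ((hmem x).mpr hx))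
  have hmain := main_aux B v hBΛ
  have e1 : {μ : Euc n | ∀ l ∈ L, ∃ k : ℤ, ⟪μ, l⟫_ℝ = (k : ℝ)}
      = {μ : Euc n | ∀ l ∈ Submodule.span ℤ (Set.range ⇑v), ∃ k : ℤ, ⟪μ, l⟫_ℝ = (k : ℝ)} := by
    ext μ
    simp only [Set.mem_setOf_eq, hmem]
  have e2 : {μ : Euc n | μ ∈ fixSubmodule B ∧
        ∀ l : Euc n, l ∈ L → l ∈ fixSubmodule B → ∃ k : ℤ, ⟪μ, l⟫_ℝ = (k : ℝ)}
      = {μ : Euc n | μ ∈ fixSubmodule B ∧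
        ∀ l : Euc n, l ∈ Submodule.span ℤ (Set.range ⇑v) → l ∈ fixSubmodule B →
          ∃ k : ℤ, ⟪μ, l⟫_ℝ = (k : ℝ)} := by
    ext μ
    simp only [Set.mem_setOf_eq, hmem]
  rw [e1, e2]
  exact hmain
end
end

section
/- Let N ≥ 1, let (d₁, a₁), …, (d_N, a_N) be pairwise distinct pairs with d_i nonnegative integers and a_i nonnegative reals, let c₁, …, c_N ∈ ℝ, and let ε > 0. If Σ_{i=1}^{N} c_i s^{−d_i/2} e^{−a_i/(4s)} = 0 for all s ∈ (0, ε), then c_i = 0 for every i. In other words, the functions s ↦ s^{−d/2} e^{−a/(4s)} on (0, ε), for distinct pairs (d, a), are linearly independent over ℝ. -/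
open Filter Set Real

lemma aux_tendsto_zero (α b : ℝ) (hb : 0 < b ∨ (b = 0 ∧ 0 < α)) :
    Tendsto (fun s : ℝ => s ^ α * Real.exp (-b / (4 * s))) (nhdsWithin 0 (Set.Ioi 0)) (nhds 0) := by
  rcases hb with hb | ⟨hb0, hα⟩
  · have h1 := tendsto_rpow_mul_exp_neg_mul_atTop_nhds_zero (-α) (b / 4) (by positivity)
    have h2 : Tendsto (fun s : ℝ => s⁻¹) (nhdsWithin 0 (Set.Ioi 0)) atTop :=
      tendsto_inv_nhdsGT_zero
    have h3 := h1.comp h2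
    refine h3.congr' ?_
    filter_upwards [self_mem_nhdsWithin] with s hs
    have hs' : (0 : ℝ) < s := hs
    simp only [Function.comp]
    have e1 : s⁻¹ ^ (-α) = s ^ α := by
      rw [Real.inv_rpow hs'.le, Real.rpow_neg hs'.le, inv_inv]
    have e2 : -(b / 4) * s⁻¹ = -b / (4 * s) := by field_simp
    rw [e1, e2]
  · have h1 : Tendsto (fun s : ℝ => s ^ α) (nhdsWithin 0 (Set.Ioi 0)) (nhds 0) := by
      have := (Real.continuousAt_rpow_const 0 α (Or.inr hα.le)).tendsto
      rw [Real.zero_rpow hα.ne'] at this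
      exact this.mono_left nhdsWithin_le_nhds
    refine h1.congr' ?_
    filter_upwards [self_mem_nhdsWithin] with s hs
    rw [hb0]
    simp

theorem linear_independence_of_heat_terms
    (N : ℕ) (hN : 1 ≤ N) (d : Fin N → ℕ) (a : Fin N → ℝ) (ha : ∀ i, 0 ≤ a i)
    (hdist : ∀ i j : Fin N, i ≠ j → (d i, a i) ≠ (d j, a j))
    (c : Fin N → ℝ) (ε : ℝ) (hε : 0 < ε)
    (h : ∀ s : ℝ, 0 < s → s < ε →
      ∑ i : Fin N, c i * s ^ (-(d i : ℝ) / 2) * Real.exp (-(a i) / (4 * s)) = 0) :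
    ∀ i : Fin N, c i = 0 := by
  by_contra hc
  push_neg at hc
  obtain ⟨i, hi⟩ := hc
  set S : Finset (Fin N) := Finset.univ.filter (fun j => c j ≠ 0) with hS
  have hSne : S.Nonempty := ⟨i, by simp [hS, hi]⟩
  -- choose i₀ minimizing a, then maximizing d, via lexicographic order
  obtain ⟨i₀, hi₀S, hmin⟩ := S.exists_min_image
    (fun j => toLex ((a j, OrderDual.toDual (d j)) : ℝ × ℕᵒᵈ)) hSne
  have hci₀ : c i₀ ≠ 0 := by simpa [hS] using hi₀S
  -- rescaled terms
  set g : Fin N → ℝ → ℝ := fun j s =>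
    c j * s ^ (((d i₀ : ℝ) - (d j : ℝ)) / 2) * Real.exp (-(a j - a i₀) / (4 * s)) with hg
  -- the sum of g is zero on (0, ε)
  have hsum0 : ∀ s : ℝ, 0 < s → s < ε → ∑ j : Fin N, g j s = 0 := by
    intro s hs hsε
    have key : ∀ j : Fin N, g j s =
        (s ^ ((d i₀ : ℝ) / 2) * Real.exp (a i₀ / (4 * s))) *
          (c j * s ^ (-(d j : ℝ) / 2) * Real.exp (-(a j) / (4 * s))) := by
      intro j
      have h1 : s ^ (((d i₀ : ℝ) - (d j : ℝ)) / 2)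
          = s ^ ((d i₀ : ℝ) / 2) * s ^ (-(d j : ℝ) / 2) := by
        rw [← Real.rpow_add hs]; ring_nf
      have h2 : Real.exp (-(a j - a i₀) / (4 * s))
          = Real.exp (a i₀ / (4 * s)) * Real.exp (-(a j) / (4 * s)) := by
        rw [← Real.exp_add]; congr 1; field_simp; ring
      rw [hg]; simp only []; rw [h1, h2]; ring
    calc ∑ j : Fin N, g j s
        = ∑ j : Fin N, (s ^ ((d i₀ : ℝ) / 2) * Real.exp (a i₀ / (4 * s))) *
            (c j * s ^ (-(d j : ℝ) / 2) * Real.exp (-(a j) / (4 * s))) :=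
          Finset.sum_congr rfl (fun j _ => key j)
      _ = (s ^ ((d i₀ : ℝ) / 2) * Real.exp (a i₀ / (4 * s))) *
            ∑ j : Fin N, c j * s ^ (-(d j : ℝ) / 2) * Real.exp (-(a j) / (4 * s)) := by
          rw [Finset.mul_sum]
      _ = 0 := by rw [h s hs hsε, mul_zero]
  -- limit of sum of g is c i₀
  have hlim : Tendsto (fun s => ∑ j : Fin N, g j s) (nhdsWithin 0 (Set.Ioi 0))
      (nhds (∑ j : Fin N, if j = i₀ then c i₀ else 0)) := by
    apply tendsto_finset_sum
    intro j _
    by_cases hj : j = i₀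
    · subst hj
      simp only [if_pos rfl]
      refine (tendsto_const_nhds : Tendsto (fun _ : ℝ => c j) _ _).congr fun s => ?_
      rw [hg]; simp
    · simp only [if_neg hj]
      by_cases hcj : c j = 0
      · have h0 : (0:ℝ) = c j := by rw [hcj]
        rw [h0]
        refine (tendsto_const_nhds : Tendsto (fun _ : ℝ => c j) _ _).congr fun s => ?_
        rw [hg]; simp [hcj]
      · -- j ∈ S, so by minimality a i₀ < a j or (a i₀ = a j and d j < d i₀)
        have hjS : j ∈ S := by simp [hS, hcj]
        have hle := hmin j hjS
        have hne : (toLex ((a i₀, OrderDual.toDual (d i₀)) : ℝ × ℕᵒᵈ)) ≠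
            (toLex ((a j, OrderDual.toDual (d j)) : ℝ × ℕᵒᵈ)) := by
          intro heq
          apply hdist i₀ j (fun hij => hj (hij.symm)) 
          have := Prod.mk.injEq (a i₀) (OrderDual.toDual (d i₀)) (a j) (OrderDual.toDual (d j))
          rw [toLex.injective.eq_iff] at heq
          obtain ⟨h1, h2⟩ := Prod.mk_inj.mp heq
          exact Prod.ext (by exact_mod_cast congrArg OrderDual.ofDual h2) h1
        have hlt := lt_of_le_of_ne hle hne
        rw [Prod.Lex.lt_iff] at hlt
        have hcase : a i₀ < a j ∨ (a i₀ = a j ∧ d j < d i₀) := by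
          rcases hlt with h1 | ⟨h1, h2⟩
          · exact Or.inl h1
          · exact Or.inr ⟨h1, by exact_mod_cast h2⟩
        have hbpos : 0 < a j - a i₀ ∨ (a j - a i₀ = 0 ∧ 0 < ((d i₀ : ℝ) - (d j : ℝ)) / 2) := by
          rcases hcase with h1 | ⟨h1, h2⟩
          · left; linarith
          · right; constructor
            · linarith
            · have : (d j : ℝ) < (d i₀ : ℝ) := by exact_mod_cast h2
              linarith
        have htz := aux_tendsto_zero (((d i₀ : ℝ) - (d j : ℝ)) / 2) (a j - a i₀) hbpos
        have : Tendsto (fun s => c j * (s ^ (((d i₀ : ℝ) - (d j : ℝ)) / 2) *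
            Real.exp (-(a j - a i₀) / (4 * s)))) (nhdsWithin 0 (Set.Ioi 0)) (nhds (c j * 0)) :=
          htz.const_mul (c j)
        rw [mul_zero] at this
        refine this.congr (fun s => ?_)
        rw [hg]; ring
  have heq0 : (fun s => ∑ j : Fin N, g j s) =ᶠ[nhdsWithin 0 (Set.Ioi 0)] (fun _ => 0) := by
    filter_upwards [Ioo_mem_nhdsGT_of_mem (by constructor <;> [rfl; exact hε] :
      (0:ℝ) ∈ Set.Ico 0 ε)] with s hs
    exact hsum0 s hs.1 hs.2
  have hlim0 : Tendsto (fun s => ∑ j : Fin N, g j s) (nhdsWithin 0 (Set.Ioi 0)) (nhds 0) :=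
    Tendsto.congr' heq0.symm tendsto_const_nhds
  have huniq : (∑ j : Fin N, if j = i₀ then c i₀ else 0) = 0 :=
    tendsto_nhds_unique hlim hlim0
  rw [Finset.sum_ite_eq' Finset.univ i₀ (fun _ => c i₀)] at huniq
  simp at huniq
  exact hci₀ huniq
end
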